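/- Let G be a Lie capable multiplicative Lie algebra such that G/(G⋆G) has finite exponent n. Then every element of 𝒵(G) = LZ(G) ∩ Z(G) has order dividing n; in particular 𝒵(G) has finite exponent. -/

import Mathlib

/-- A multiplicative Lie algebra (Ellis): a group `G` with a second binary
operation `⋆` satisfying the five identities. `ˣy` denotes `x*y*x⁻¹`. -/
class MulLie (G : Type*) [Group G] where
  star : G → G → G
  star_self : ∀ x : G, star x x = 1
  star_mul_right : ∀ x y z : G, star x (y * z) = star x y * (y * star x z * y⁻¹)
  star_mul_left : ∀ x y z : G, star (x * y) z = (x * star y z * x⁻¹) * star x z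
  jacobi : ∀ x y z : G,
    star (star x y) (y * z * y⁻¹) * star (star y z) (z * x * z⁻¹) *
      star (star z x) (x * y * x⁻¹) = 1
  conj_star : ∀ x y z : G, z * star x y * z⁻¹ = star (z * x * z⁻¹) (z * y * z⁻¹)

open MulLie

/-- `𝒵(G) = LZ(G) ∩ Z(G)`: the elements that are in the Lie center and in the
group center. -/
def zSet (G : Type u) [Group G] [MulLie G] : Set G :=
  {x : G | (∀ y : G, star x y = 1) ∧ ∀ y : G, x * y = y * x}

/-- A central extension `1 → ker f → E → G → 1` of the multiplicative Lie
algebra `G`: a surjective multiplicative Lie algebra homomorphism `f : E → G`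
whose kernel is contained in `Z(E) ∩ LZ(E)`. -/
structure CentralExtOf (G : Type u) [Group G] [MulLie G] : Type (u + 1) where
  E : Type u
  [grp : Group E]
  [lie : MulLie E]
  f : E →* G
  surj : Function.Surjective f
  map_star : ∀ x y : E, f (MulLie.star x y) = star (f x) (f y)
  central : ∀ x : E, f x = 1 → x ∈ zSet E

attribute [instance] CentralExtOf.grp CentralExtOf.lie

/-- A multiplicative Lie algebra `G` is Lie capable if `G ≅ E/𝒵(E)` for some
multiplicative Lie algebra `E`, i.e. there is a surjective multiplicative Lie
algebra homomorphism `E → G` whose kernel is exactly `𝒵(E)`. -/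
def LieCapable (G : Type u) [Group G] [MulLie G] : Prop :=
  ∃ C : CentralExtOf G, ∀ x : C.E, C.f x = 1 ↔ x ∈ zSet C.E


section Aux
variable {E : Type*} [Group E] [MulLie E]

lemma star_one_right (x : E) : star x (1:E) = 1 := by
  have h := star_mul_right x 1 (1:E)
  simp at h
  exact h

lemma star_antisymm (x y : E) : star x y = (star y x)⁻¹ := by
  have h : star (x*y) (x*y) = 1 := star_self _
  rw [star_mul_left, star_mul_right, star_mul_right, star_self, star_self] at h
  simp [mul_assoc] at h
  have h2 : star y x * star x y = 1 := by
    have := congrArg (fun t => x⁻¹ * t * x) h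
    simpa [mul_assoc] using this
  rw [eq_inv_iff_mul_eq_one, ← mul_eq_one_iff_inv_eq.mp h2, inv_mul_cancel]

lemma star_one_left (x : E) : star (1:E) x = 1 := by
  rw [star_antisymm, star_one_right, inv_one]

lemma star_right_central {k : E} (hk : ∀ y : E, star k y = 1) (u : E) :
    star u k = 1 := by rw [star_antisymm, hk, inv_one]

lemma star_inv_right (x y : E) : star x y⁻¹ = y⁻¹ * (star x y)⁻¹ * y := by
  have h := star_mul_right x y y⁻¹
  rw [mul_inv_cancel, star_one_right] at h
  have h3 : (star x y)⁻¹ = y * star x y⁻¹ * y⁻¹ := mul_eq_one_iff_inv_eq.mp h.symm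
  rw [h3]
  group

end Aux

/-- If `G` is Lie capable and `G/(G ⋆ G)` has finite exponent `n`, then every
element of `𝒵(G) = LZ(G) ∩ Z(G)` has order dividing `n`; in particular `𝒵(G)`
has finite exponent. -/
theorem zSet_exponent_of_lieCapable {G : Type u} [Group G] [MulLie G]
    (hcap : LieCapable G) (n : ℕ) (hn : 0 < n)
    (hexp : ∀ g : G, g ^ n ∈ Subgroup.closure {z : G | ∃ a b : G, z = star a b}) :
    ∀ x ∈ zSet G, x ^ n = 1 := by
  obtain ⟨C, hC⟩ := hcap
  intro x hx
  obtain ⟨e, he⟩ := C.surj x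
  have hker : ∀ k : C.E, C.f k = 1 →
      (∀ y : C.E, star k y = 1) ∧ ∀ y : C.E, k * y = y * k :=
    fun k hk => C.central k hk
  -- star e z is in the kernel
  have hs1 : ∀ z : C.E, C.f (star e z) = 1 := fun z => by
    rw [C.map_star, he, hx.1]
  have hsC := fun z => hker _ (hs1 z)
  -- the commutator of e with anything is in the kernel
  have hc1 : ∀ z : C.E, C.f (e * z * e⁻¹ * z⁻¹) = 1 := fun z => by
    simp only [map_mul, map_inv, he]
    rw [show x * C.f z * x⁻¹ * (C.f z)⁻¹ = x * C.f z * (x⁻¹ * (C.f z)⁻¹) by group,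
      hx.2 (C.f z)]
    group
  have hcC := fun z => hker _ (hc1 z)
  -- e commutes with every star a b
  have hconj : ∀ a b : C.E, e * star a b * e⁻¹ = star a b := by
    intro a b
    have hca : C.f (a⁻¹ * e * a * e⁻¹) = 1 := by
      simp only [map_mul, map_inv, he]
      rw [show (C.f a)⁻¹ * x * C.f a * x⁻¹ = (C.f a)⁻¹ * (x * C.f a) * x⁻¹ by group,
        hx.2 (C.f a)]
      group
    have hcb : C.f (b⁻¹ * e * b * e⁻¹) = 1 := by
      simp only [map_mul, map_inv, he]
      rw [show (C.f b)⁻¹ * x * C.f b * x⁻¹ = (C.f b)⁻¹ * (x * C.f b) * x⁻¹ by group,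
        hx.2 (C.f b)]
      group
    rw [conj_star, show e * a * e⁻¹ = a * (a⁻¹ * e * a * e⁻¹) by group,
      show e * b * e⁻¹ = b * (b⁻¹ * e * b * e⁻¹) by group,
      star_mul_right, star_right_central (hker _ hcb).1, star_mul_left,
      (hker _ hca).1]
    simp
  -- e Lie-commutes with every star a b
  have hstarstar : ∀ a b : C.E, star e (star a b) = 1 := by
    intro a b
    have hj := jacobi a b e
    have t2 : star (star b e) (e * a * e⁻¹) = 1 := by
      have hbe : C.f (star b e) = 1 := by
        rw [C.map_star, he, star_antisymm, hx.1, inv_one]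
      exact (hker _ hbe).1 _
    have t3 : star (star e a) (a * b * a⁻¹) = 1 := (hker _ (hs1 a)).1 _
    have hk : C.f (e⁻¹ * b * e * b⁻¹) = 1 := by
      simp only [map_mul, map_inv, he]
      rw [show x⁻¹ * C.f b * x * (C.f b)⁻¹ = x⁻¹ * (C.f b * x) * (C.f b)⁻¹ by group,
        ← hx.2 (C.f b)]
      group
    rw [show b * e * b⁻¹ = e * (e⁻¹ * b * e * b⁻¹) by group, star_mul_right,
      star_right_central (hker _ hk).1, t2, t3] at hj
    simp at hj
    rw [star_antisymm, hj, inv_one]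
  -- power rules
  have pow_star : ∀ (z : C.E) (m : ℕ), star e (z ^ m) = (star e z) ^ m := by
    intro z m
    induction m with
    | zero => simpa using star_one_right e
    | succ k ih =>
      rw [pow_succ, star_mul_right, ih, pow_succ]
      congr 1
      have hc := (hsC z).2 (z ^ k)
      rw [← hc]
      group
  have pow_star_left : ∀ (z : C.E) (m : ℕ), star (e ^ m) z = (star e z) ^ m := by
    intro z m
    induction m with
    | zero => simpa using star_one_left z
    | succ k ih =>
      rw [pow_succ, star_mul_left, ih]
      have hc : star e z * (star e z) ^ k = (star e z) ^ (k+1) := (pow_succ' _ _).symm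
      rw [← hc]
      congr 1
      have h2 := (hsC z).2 (e ^ k)
      rw [← h2]
      group
  have pow_commL : ∀ (z : C.E) (m : ℕ),
      e ^ m * z * (e ^ m)⁻¹ = (e * z * e⁻¹ * z⁻¹) ^ m * z := by
    intro z m
    induction m with
    | zero => simp
    | succ k ih =>
      have h1 : e * (e * z * e⁻¹ * z⁻¹) ^ k = (e * z * e⁻¹ * z⁻¹) ^ k * e :=
        (((show Commute (e * z * e⁻¹ * z⁻¹) e from (hcC z).2 e).pow_left k).symm).eq
      rw [pow_succ', show e * e ^ k * z * (e * e ^ k)⁻¹ =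
          e * (e ^ k * z * (e ^ k)⁻¹) * e⁻¹ by group, ih,
        show e * ((e * z * e⁻¹ * z⁻¹) ^ k * z) * e⁻¹ =
          e * (e * z * e⁻¹ * z⁻¹) ^ k * (z * e⁻¹) by group, h1,
        pow_succ, mul_assoc ((e * z * e⁻¹ * z⁻¹) ^ k) e (z * e⁻¹),
        mul_assoc ((e * z * e⁻¹ * z⁻¹) ^ k) (e * z * e⁻¹ * z⁻¹) z,
        mul_left_cancel_iff]
      group
  have pow_commR : ∀ (z : C.E) (m : ℕ),
      e * z ^ m * e⁻¹ = (e * z * e⁻¹ * z⁻¹) ^ m * z ^ m := by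
    intro z m
    induction m with
    | zero => simp
    | succ k ih =>
      have h1 : (e * z * e⁻¹ * z⁻¹) * z ^ k = z ^ k * (e * z * e⁻¹ * z⁻¹) :=
        (hcC z).2 (z ^ k)
      rw [pow_succ, show e * (z ^ k * z) * e⁻¹ = (e * z ^ k * e⁻¹) * (e * z * e⁻¹) by group,
        ih, show (e * z * e⁻¹ * z⁻¹) ^ k * z ^ k * (e * z * e⁻¹) =
          (e * z * e⁻¹ * z⁻¹) ^ k * (z ^ k * (e * z * e⁻¹ * z⁻¹)) * z by group, ← h1,
        pow_succ]
      group
  -- decomposition of n-th powers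
  have hdecomp : ∀ z : C.E, ∃ w k : C.E,
      w ∈ Subgroup.closure {u : C.E | ∃ a b : C.E, u = star a b} ∧
        C.f k = 1 ∧ z ^ n = w * k := by
    intro z
    have hle : Subgroup.closure {g : G | ∃ a b : G, g = star a b} ≤
        (Subgroup.closure {u : C.E | ∃ a b : C.E, u = star a b}).map C.f := by
      rw [Subgroup.closure_le]
      rintro g ⟨a, b, rfl⟩
      obtain ⟨a', ha⟩ := C.surj a
      obtain ⟨b', hb⟩ := C.surj b
      exact ⟨star a' b', Subgroup.subset_closure ⟨a', b', rfl⟩, by rw [C.map_star, ha, hb]⟩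
    obtain ⟨w, hw, hfw⟩ := hle (hexp (C.f z))
    refine ⟨w, w⁻¹ * z ^ n, hw, ?_, by group⟩
    rw [map_mul, map_inv, hfw, map_pow]
    group
  -- e Lie-commutes and commutes with everything in the closure
  have hstar_closure : ∀ w ∈ Subgroup.closure {u : C.E | ∃ a b : C.E, u = star a b},
      star e w = 1 := by
    intro w hw
    induction hw using Subgroup.closure_induction with
    | mem u hu => obtain ⟨a, b, rfl⟩ := hu; exact hstarstar a b
    | one => exact star_one_right e
    | mul a b _ _ ha hb => rw [star_mul_right, ha, hb]; simp
    | inv a _ ha => rw [star_inv_right, ha]; simp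
  have hcomm_closure : ∀ w ∈ Subgroup.closure {u : C.E | ∃ a b : C.E, u = star a b},
      e * w = w * e := by
    intro w hw
    induction hw using Subgroup.closure_induction with
    | mem u hu =>
      obtain ⟨a, b, rfl⟩ := hu
      have := hconj a b
      calc e * star a b = (e * star a b * e⁻¹) * e := by group
        _ = star a b * e := by rw [this]
    | one => simp
    | mul a b _ _ ha hb =>
      calc e * (a * b) = (e * a) * b := by group
        _ = a * (e * b) := by rw [ha]; group
        _ = a * b * e := by rw [hb]; group
    | inv a _ ha =>
      simpa [mul_assoc] using (congrArg (fun t => a⁻¹ * t * a⁻¹) ha).symm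
  -- the key vanishing facts
  have key : ∀ z : C.E, (star e z) ^ n = 1 ∧ (e * z * e⁻¹ * z⁻¹) ^ n = 1 := by
    intro z
    obtain ⟨w, k, hw, hk, hzn⟩ := hdecomp z
    have hkc := hker k hk
    constructor
    · rw [← pow_star z n, hzn, star_mul_right, hstar_closure w hw,
        star_right_central hkc.1]
      simp
    · have hQ := pow_commR z n
      rw [hzn] at hQ
      have h1 : e * (w * k) * e⁻¹ = w * k := by
        calc e * (w * k) * e⁻¹ = (e * w) * (k * e⁻¹) := by group
          _ = (w * e) * (e⁻¹ * k) := by rw [hcomm_closure w hw, hkc.2 e⁻¹]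
          _ = w * k := by group
      rw [h1] at hQ
      exact (right_eq_mul.mp hQ)
  -- conclude
  have hmem : e ^ n ∈ zSet C.E := by
    refine ⟨fun y => ?_, fun y => ?_⟩
    · rw [pow_star_left y n, (key y).1]
    · have h := pow_commL y n
      rw [(key y).2, one_mul] at h
      have := congrArg (fun t => t * e ^ n) h
      simpa [mul_assoc] using this
  have hfin : C.f (e ^ n) = 1 := (hC _).mpr hmem
  rw [map_pow, he] at hfin
  exact hfin
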